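/- In the 1-dimensional Setup, for every p ∈ (0,1) (a p fraction of agents are non-strategic and a 1−p fraction follow standard microfoundations), no locally stable points exist: for every θ ∈ [a,b], θ is neither a local minimum on [a,b] of the function θ' ↦ L_p(θ,θ') nor a point where this function is differentiable at θ' = θ with derivative zero. -/

import Mathlib

open MeasureTheory Set Filter Topology ENNReal NNReal

/-- Best response of an agent with features `x` to the threshold classifier `1{· ≥ θ}`
under a cost function `c` with utility `γ = 1` for positive classification. -/
noncomputable def bestResponse (c : ℝ → ℝ → ℝ) (θ x : ℝ) : ℝ :=
  if θ ≤ x then x else if c x θ ≤ 1 then θ else x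

/-- Risk of the threshold `θ'` on the base (non-strategic) population. -/
noncomputable def nonStrategicRisk (β : Measure ℝ) (μ : ℝ → ℝ) (θ' : ℝ) : ℝ :=
  ∫ x, (if θ' ≤ x then 1 - μ x else μ x) ∂β

/-- Decoupled performative risk of the threshold `θ'` on the distribution induced by
deploying `θ` against agents following standard microfoundations. -/
noncomputable def smRisk (β : Measure ℝ) (μ : ℝ → ℝ) (c : ℝ → ℝ → ℝ) (θ θ' : ℝ) : ℝ :=
  ∫ x, (if θ' ≤ bestResponse c θ x then 1 - μ x else μ x) ∂β

/-- Decoupled performative risk for a mixture of a `p` fraction of non-strategic agents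
and a `1 - p` fraction of agents following standard microfoundations. -/
noncomputable def mixRisk (β : Measure ℝ) (μ : ℝ → ℝ) (c : ℝ → ℝ → ℝ) (p θ θ' : ℝ) : ℝ :=
  p * nonStrategicRisk β μ θ' + (1 - p) * smRisk β μ c θ θ'

/-- `θ` is locally (performatively) stable: it is a local minimum on `[a,b]` of the
decoupled performative risk `θ' ↦ L_p(θ, θ')`, or that map is differentiable at `θ`
with derivative `0`. -/
def LocallyStable (β : Measure ℝ) (μ : ℝ → ℝ) (c : ℝ → ℝ → ℝ) (a b p θ : ℝ) : Prop :=
  IsLocalMinOn (fun θ' => mixRisk β μ c p θ θ') (Icc a b) θ ∨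
    HasDerivAt (fun θ' => mixRisk β μ c p θ θ') 0 θ

/-- The set of agents who game to the threshold `θ`. -/
def Qset (c : ℝ → ℝ → ℝ) (a b θ : ℝ) : Set ℝ := {x | x ∈ Icc a b ∧ x < θ ∧ c x θ ≤ 1}

/-- Average of `μ` over the gaming set `Q(θ)`. -/
noncomputable def Gam (β : Measure ℝ) (μ : ℝ → ℝ) (c : ℝ → ℝ → ℝ) (a b θ : ℝ) : ℝ :=
  (∫ x in Qset c a b θ, μ x ∂β) / (β (Qset c a b θ)).toReal

lemma kill_right (f : ℝ → ℝ) (a b θ K δ : ℝ) (hK : 0 < K) (hδ : 0 < δ)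
    (hθa : a ≤ θ) (hb : θ + δ ≤ b)
    (h : ∀ θ' ∈ Ioc θ (θ + δ), f θ' ≤ f θ - K * (θ' - θ)) :
    ¬ (IsLocalMinOn f (Icc a b) θ ∨ HasDerivAt f 0 θ) := by
  have hθb : θ < θ + δ := by linarith
  have hsub : Ioc θ (θ + δ) ⊆ Icc a b := fun x hx => ⟨by linarith [hx.1], by linarith [hx.2]⟩
  haveI : (𝓝[Ioc θ (θ + δ)] θ).NeBot := by
    rw [nhdsWithin_Ioc_eq_nhdsGT hθb]; infer_instance
  rintro (hmin | hder)
  · have h1 : ∀ᶠ θ' in 𝓝[Ioc θ (θ + δ)] θ, f θ ≤ f θ' :=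
      hmin.filter_mono (nhdsWithin_mono θ hsub)
    have h2 : ∀ᶠ θ' in 𝓝[Ioc θ (θ + δ)] θ, θ' ∈ Ioc θ (θ + δ) :=
      eventually_mem_nhdsWithin
    obtain ⟨θ', h1', h2'⟩ := (h1.and h2).exists
    have h3 := h θ' h2'
    nlinarith [h2'.1, mul_pos hK (sub_pos.mpr h2'.1)]
  · rw [hasDerivAt_iff_tendsto_slope] at hder
    have hev : ∀ᶠ θ' in 𝓝[{θ}ᶜ] θ, |slope f θ θ'| < K := by
      have := Metric.tendsto_nhds.mp hder K hK
      filter_upwards [this] with x hx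
      simpa [Real.dist_eq] using hx
    have hev' : ∀ᶠ θ' in 𝓝[Ioc θ (θ + δ)] θ, |slope f θ θ'| < K :=
      hev.filter_mono (nhdsWithin_mono θ (fun x hx => ne_of_gt hx.1))
    have h2 : ∀ᶠ θ' in 𝓝[Ioc θ (θ + δ)] θ, θ' ∈ Ioc θ (θ + δ) :=
      eventually_mem_nhdsWithin
    obtain ⟨θ', h1', h2'⟩ := (hev'.and h2).exists
    have h3 := h θ' h2'
    have hpos : 0 < θ' - θ := sub_pos.mpr h2'.1
    have hs : slope f θ θ' ≤ -K := by
      rw [slope_def_field, div_le_iff₀ hpos]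
      nlinarith
    have := neg_le_abs (slope f θ θ')
    linarith

lemma kill_left (f : ℝ → ℝ) (a b θ K δ : ℝ) (hK : 0 < K) (hδ : 0 < δ)
    (ha : a ≤ θ - δ) (hθb : θ ≤ b)
    (h : ∀ θ' ∈ Ico (θ - δ) θ, f θ' ≤ f θ - K * (θ - θ')) :
    ¬ (IsLocalMinOn f (Icc a b) θ ∨ HasDerivAt f 0 θ) := by
  have hθb' : θ - δ < θ := by linarith
  have hsub : Ico (θ - δ) θ ⊆ Icc a b := fun x hx => ⟨by linarith [hx.1], by linarith [hx.2]⟩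
  haveI : (𝓝[Ico (θ - δ) θ] θ).NeBot := by
    rw [nhdsWithin_Ico_eq_nhdsLT hθb']; infer_instance
  rintro (hmin | hder)
  · have h1 : ∀ᶠ θ' in 𝓝[Ico (θ - δ) θ] θ, f θ ≤ f θ' :=
      hmin.filter_mono (nhdsWithin_mono θ hsub)
    have h2 : ∀ᶠ θ' in 𝓝[Ico (θ - δ) θ] θ, θ' ∈ Ico (θ - δ) θ :=
      eventually_mem_nhdsWithin
    obtain ⟨θ', h1', h2'⟩ := (h1.and h2).exists
    have h3 := h θ' h2'
    nlinarith [h2'.2, mul_pos hK (sub_pos.mpr h2'.2)]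
  · rw [hasDerivAt_iff_tendsto_slope] at hder
    have hev : ∀ᶠ θ' in 𝓝[{θ}ᶜ] θ, |slope f θ θ'| < K := by
      have := Metric.tendsto_nhds.mp hder K hK
      filter_upwards [this] with x hx
      simpa [Real.dist_eq] using hx
    have hev' : ∀ᶠ θ' in 𝓝[Ico (θ - δ) θ] θ, |slope f θ θ'| < K :=
      hev.filter_mono (nhdsWithin_mono θ (fun x hx => ne_of_lt hx.2))
    have h2 : ∀ᶠ θ' in 𝓝[Ico (θ - δ) θ] θ, θ' ∈ Ico (θ - δ) θ :=
      eventually_mem_nhdsWithin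
    obtain ⟨θ', h1', h2'⟩ := (hev'.and h2).exists
    have h3 := h θ' h2'
    have hpos : 0 < θ - θ' := sub_pos.mpr h2'.2
    have hs : K ≤ slope f θ θ' := by
      rw [slope_def_field, le_div_iff_of_neg (by linarith : θ' - θ < 0)]
      nlinarith
    have := le_abs_self (slope f θ θ')
    linarith


set_option maxHeartbeats 1000000 in
/-- Proposition 2(b): for any p ∈ (0,1), no locally stable points exist. -/
theorem stmt4
    (a b : ℝ) (hab : a < b)
    (c : ℝ → ℝ → ℝ) (hc_cont : Continuous fun p : ℝ × ℝ => c p.1 p.2)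
    (hc_zero : ∀ x, c x x = 0)
    (hc_between : ∀ x xP z : ℝ, min x xP < z → z < max x xP →
      c x z < c x xP ∧ c z x < c xP x)
    (g : ℝ → ℝ) (hg_cont : ContinuousOn g (Icc a b)) (hg_pos : ∀ x ∈ Icc a b, 0 < g x)
    (β : Measure ℝ)
    (hβ : β = (volume.restrict (Icc a b)).withDensity fun x => ENNReal.ofReal (g x))
    (hβprob : IsProbabilityMeasure β)
    (μ : ℝ → ℝ) (hμ_cont : ContinuousOn μ (Icc a b)) (hμ_mono : StrictMonoOn μ (Icc a b))
    (hμ_range : ∀ x ∈ Icc a b, μ x ∈ Icc (0:ℝ) 1)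
    (θSL : ℝ) (hθSL : θSL ∈ Ioo a b) (hhalf : μ θSL = 1/2) :
    ∀ p ∈ Ioo (0:ℝ) 1, ∀ θ ∈ Icc a b, ¬ LocallyStable β μ c a b p θ := by
  haveI := hβprob
  intro p hp θ hθ
  -- basic facts
  have haIcc : a ∈ Icc a b := ⟨le_refl a, hab.le⟩
  have hbIcc : b ∈ Icc a b := ⟨hab.le, le_refl b⟩
  have hSLIcc : θSL ∈ Icc a b := ⟨hθSL.1.le, hθSL.2.le⟩
  have hac : β ≪ volume.restrict (Icc a b) := by
    rw [hβ]; exact withDensity_absolutelyContinuous _ _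
  have hIccae : ∀ᵐ x ∂β, x ∈ Icc a b := by
    have h0 : (volume.restrict (Icc a b)) (Icc a b)ᶜ = 0 := by
      rw [Measure.restrict_apply measurableSet_Icc.compl, compl_inter_self, measure_empty]
    exact mem_ae_iff.mpr (hac h0)
  have hμβ : AEMeasurable μ β :=
    (hμ_cont.aemeasurable measurableSet_Icc).mono_ac hac
  -- min and max of g
  obtain ⟨x₀, hx₀, hmin⟩ := isCompact_Icc.exists_isMinOn ⟨a, haIcc⟩ hg_cont
  obtain ⟨x₁, hx₁, hmax⟩ := isCompact_Icc.exists_isMaxOn ⟨a, haIcc⟩ hg_cont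
  set m := g x₀ with hm_def
  set G := g x₁ with hG_def
  have hm_pos : 0 < m := hg_pos x₀ hx₀
  have hm_le : ∀ x ∈ Icc a b, m ≤ g x := fun x hx => hmin hx
  have hG_ge : ∀ x ∈ Icc a b, g x ≤ G := fun x hx => hmax hx
  have hG_pos : 0 < G := lt_of_lt_of_le hm_pos (hm_le x₁ hx₁)
  -- integrability of β-integrands
  have hbound : ∀ (h : ℝ → ℝ), AEStronglyMeasurable h β → (∀ x ∈ Icc a b, |h x| ≤ 1) →
      Integrable h β := by
    intro h hmeas hb
    refine Integrable.mono' (integrable_const 1) hmeas ?_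
    filter_upwards [hIccae] with x hx
    simpa [Real.norm_eq_abs] using hb x hx
  have hns_int : ∀ t : ℝ, Integrable (fun x => if t ≤ x then 1 - μ x else μ x) β := by
    intro t
    refine hbound _ ?_ ?_
    · have heq : (fun x => if t ≤ x then 1 - μ x else μ x)
          = fun x => (Ici t).indicator (fun y => 1 - 2 * μ y) x + μ x := by
        funext x
        by_cases hx : t ≤ x
        · rw [if_pos hx, Set.indicator_of_mem (mem_Ici.mpr hx)]; ring
        · rw [if_neg hx, Set.indicator_of_notMem (fun h => hx (mem_Ici.mp h)), zero_add]
      rw [heq]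
      exact (((aemeasurable_const.sub (hμβ.const_mul 2)).indicator measurableSet_Ici).add
        hμβ).aestronglyMeasurable
    · intro x hx
      obtain ⟨h0, h1⟩ := hμ_range x hx
      rw [abs_le]; constructor <;> (split_ifs <;> linarith)
  have hRmeas : Measurable (bestResponse c θ) := by
    unfold bestResponse
    refine Measurable.ite (measurableSet_le measurable_const measurable_id) measurable_id ?_
    refine Measurable.ite ?_ measurable_const measurable_id
    exact measurableSet_le
      ((hc_cont.comp (continuous_id.prodMk continuous_const)).measurable) measurable_const
  have hsm_int : ∀ t : ℝ,
      Integrable (fun x => if t ≤ bestResponse c θ x then 1 - μ x else μ x) β := by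
    intro t
    refine hbound _ ?_ ?_
    · have hSmeas : MeasurableSet {x : ℝ | t ≤ bestResponse c θ x} :=
        hRmeas measurableSet_Ici
      have heq : (fun x => if t ≤ bestResponse c θ x then 1 - μ x else μ x)
          = fun x => ({x : ℝ | t ≤ bestResponse c θ x}).indicator (fun y => 1 - 2 * μ y) x
              + μ x := by
        funext x
        by_cases hx : t ≤ bestResponse c θ x
        · rw [if_pos hx, Set.indicator_of_mem
            (show x ∈ {x : ℝ | t ≤ bestResponse c θ x} from hx) (fun y => 1 - 2 * μ y)]
          ring
        · rw [if_neg hx, Set.indicator_of_notMem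
            (show x ∉ {x : ℝ | t ≤ bestResponse c θ x} from hx) (fun y => 1 - 2 * μ y), zero_add]
      rw [heq]
      exact (((aemeasurable_const.sub (hμβ.const_mul 2)).indicator hSmeas).add
        hμβ).aestronglyMeasurable
    · intro x hx
      obtain ⟨h0, h1⟩ := hμ_range x hx
      rw [abs_le]; constructor <;> (split_ifs <;> linarith)
  have hIndInt : ∀ S : Set ℝ, MeasurableSet S →
      Integrable (S.indicator fun y => 2 * μ y - 1) β := by
    intro S hS
    refine hbound _ (((hμβ.const_mul 2).sub aemeasurable_const).indicator hS).aestronglyMeasurable ?_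
    intro x hx
    obtain ⟨h0, h1⟩ := hμ_range x hx
    by_cases hxS : x ∈ S
    · rw [Set.indicator_of_mem hxS, abs_le]; constructor <;> linarith
    · rw [Set.indicator_of_notMem hxS]; simp
  -- difference of β-integrals
  have key : ∀ (h₁ h₂ D : ℝ → ℝ), Integrable h₁ β → Integrable h₂ β →
      (∀ x ∈ Icc a b, h₁ x - h₂ x = D x) →
      (∫ x, h₁ x ∂β) - (∫ x, h₂ x ∂β) = ∫ x, D x ∂β := by
    intro h₁ h₂ D hi1 hi2 hD
    rw [← integral_sub hi1 hi2]
    exact integral_congr_ae (by filter_upwards [hIccae] with x hx using hD x hx)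
  have hcong : ∀ h₁ h₂ : ℝ → ℝ, (∀ x ∈ Icc a b, h₁ x = h₂ x) →
      (∫ x, h₁ x ∂β) = ∫ x, h₂ x ∂β := by
    intro h₁ h₂ hh
    exact integral_congr_ae (by filter_upwards [hIccae] with x hx using hh x hx)
  -- converting indicator β-integrals to volume integrals
  have HB : ∀ S : Set ℝ, MeasurableSet S → S ⊆ Icc a b →
      (∫ x, S.indicator (fun y => 2 * μ y - 1) x ∂β)
        = ∫ x in S, (2 * μ x - 1) * g x ∂volume := by
    intro S hS hSsub
    rw [integral_indicator hS, hβ, restrict_withDensity hS, Measure.restrict_restrict hS,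
      inter_eq_self_of_subset_left hSsub]
    have hg' : AEMeasurable (fun x => Real.toNNReal (g x)) (volume.restrict S) :=
      continuous_real_toNNReal.measurable.comp_aemeasurable
        ((hg_cont.mono hSsub).aemeasurable hS)
    rw [show (fun x => ENNReal.ofReal (g x))
        = (fun x => ((fun y => Real.toNNReal (g y)) x : ℝ≥0∞)) from rfl]
    rw [integral_withDensity_eq_integral_smul₀ hg' _]
    refine setIntegral_congr_fun hS (fun x hx => ?_)
    rw [NNReal.smul_def, Real.coe_toNNReal _ (hg_pos x (hSsub hx)).le, smul_eq_mul]
    ring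
  -- integrand continuity / integrability on Icc
  have hd_cont : ContinuousOn (fun x => (2 * μ x - 1) * g x) (Icc a b) :=
    (((continuousOn_const.mul hμ_cont).sub continuousOn_const).mul hg_cont)
  have hd_int : IntegrableOn (fun x => (2 * μ x - 1) * g x) (Icc a b) volume :=
    hd_cont.integrableOn_Icc
  have hd1_cont : ContinuousOn (fun x => (1 - 2 * μ x) * g x) (Icc a b) :=
    ((continuousOn_const.sub (continuousOn_const.mul hμ_cont)).mul hg_cont)
  have hd1_int : IntegrableOn (fun x => (1 - 2 * μ x) * g x) (Icc a b) volume :=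
    hd1_cont.integrableOn_Icc
  -- core bounds for intervals
  have hCoreLe : ∀ s t K' : ℝ, a ≤ s → s ≤ t → t ≤ b →
      (∀ x ∈ Ico s t, (2 * μ x - 1) * g x ≤ K') →
      (∫ x in Ico s t, (2 * μ x - 1) * g x ∂volume) ≤ K' * (t - s) := by
    intro s t K' has hst htb hbd
    have hsub : Ico s t ⊆ Icc a b := fun x hx => ⟨le_trans has hx.1, le_trans hx.2.le htb⟩
    have h1 : (∫ x in Ico s t, (2 * μ x - 1) * g x ∂volume) ≤ ∫ _x in Ico s t, K' ∂volume :=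
      setIntegral_mono_on (hd_int.mono_set hsub)
        (integrableOn_const measure_Ico_lt_top.ne) measurableSet_Ico hbd
    rw [setIntegral_const, Real.volume_real_Ico_of_le (by linarith)] at h1
    calc (∫ x in Ico s t, (2 * μ x - 1) * g x ∂volume) ≤ (t - s) • K' := h1
    _ = K' * (t - s) := by rw [smul_eq_mul]; ring
  have hCoreGe : ∀ s t K' : ℝ, a ≤ s → s ≤ t → t ≤ b →
      (∀ x ∈ Ico s t, K' ≤ (2 * μ x - 1) * g x) →
      K' * (t - s) ≤ ∫ x in Ico s t, (2 * μ x - 1) * g x ∂volume := by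
    intro s t K' has hst htb hbd
    have hsub : Ico s t ⊆ Icc a b := fun x hx => ⟨le_trans has hx.1, le_trans hx.2.le htb⟩
    have h1 : (∫ _x in Ico s t, K' ∂volume) ≤ ∫ x in Ico s t, (2 * μ x - 1) * g x ∂volume :=
      setIntegral_mono_on (integrableOn_const measure_Ico_lt_top.ne)
        (hd_int.mono_set hsub) measurableSet_Ico hbd
    rw [setIntegral_const, Real.volume_real_Ico_of_le (by linarith)] at h1
    calc K' * (t - s) = (t - s) • K' := by rw [smul_eq_mul]; ring
    _ ≤ _ := h1
  -- difference formula for nonStrategicRisk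
  have hRnsdiff : ∀ s t : ℝ, a ≤ s → s ≤ t → t ≤ b →
      nonStrategicRisk β μ t - nonStrategicRisk β μ s
        = ∫ x in Ico s t, (2 * μ x - 1) * g x ∂volume := by
    intro s t has hst htb
    have hsub : Ico s t ⊆ Icc a b := fun x hx => ⟨le_trans has hx.1, le_trans hx.2.le htb⟩
    have hpt : ∀ x ∈ Icc a b,
        (if t ≤ x then 1 - μ x else μ x) - (if s ≤ x then 1 - μ x else μ x)
          = (Ico s t).indicator (fun y => 2 * μ y - 1) x := by
      intro x hx
      by_cases h1 : t ≤ x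
      · rw [if_pos h1, if_pos (le_trans hst h1), Set.indicator_of_notMem
          (fun hm => absurd (mem_Ico.mp hm).2 (not_lt.mpr h1))]
        ring
      · by_cases h2 : s ≤ x
        · rw [if_neg h1, if_pos h2,
            Set.indicator_of_mem (mem_Ico.mpr ⟨h2, lt_of_not_ge h1⟩)]
          ring
        · rw [if_neg h1, if_neg h2, Set.indicator_of_notMem
            (fun hm => absurd (mem_Ico.mp hm).1 h2)]
          ring
    rw [nonStrategicRisk, nonStrategicRisk,
      key _ _ _ (hns_int t) (hns_int s) hpt, HB _ measurableSet_Ico hsub]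
  -- c-window around a point
  have hcwin : ∀ θ₀ : ℝ, ∃ δc > 0, ∀ x : ℝ, |x - θ₀| < δc → c x θ₀ ≤ 1 := by
    intro θ₀
    have hcont : Continuous fun x => c x θ₀ :=
      hc_cont.comp (continuous_id.prodMk continuous_const)
    have hopen : IsOpen {x : ℝ | c x θ₀ < 1} := isOpen_lt hcont continuous_const
    have hmem : θ₀ ∈ {x : ℝ | c x θ₀ < 1} := by simp [hc_zero θ₀]
    obtain ⟨δc, hδc, hball⟩ := Metric.isOpen_iff.mp hopen θ₀ hmem
    exact ⟨δc, hδc, fun x hx =>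
      le_of_lt (hball (by rwa [Metric.mem_ball, Real.dist_eq]))⟩
  have hp0 : 0 < p := hp.1
  have hp1 : p < 1 := hp.2
  intro hLS
  have hLS' : IsLocalMinOn (fun θ' => mixRisk β μ c p θ θ') (Icc a b) θ ∨
      HasDerivAt (fun θ' => mixRisk β μ c p θ θ') 0 θ := hLS
  by_cases hcase1 : θ = a
  · -- Case I.a : θ = a
    have hθSLgt : θ < θSL := by rw [hcase1]; exact hθSL.1
    have hθb : θ < b := by rw [hcase1]; exact hab
    set δ := min ((θSL - θ) / 2) (b - θ) with hδdef
    have hδ : 0 < δ := lt_min (by linarith) (by linarith)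
    have hδ1 : δ ≤ (θSL - θ) / 2 := min_le_left _ _
    have hδ2 : δ ≤ b - θ := min_le_right _ _
    have haδb : θ + δ ≤ b := by linarith
    have haδSL : θ + δ < θSL := by linarith
    have haδIcc : θ + δ ∈ Icc a b := ⟨by linarith [hθ.1], haδb⟩
    set ε := 1 - 2 * μ (θ + δ) with hεdef
    have hε : 0 < ε := by
      have := hμ_mono haδIcc hSLIcc haδSL
      rw [hhalf] at this
      simp only [hεdef]; linarith
    have hsmeq : ∀ t : ℝ, smRisk β μ c θ t = nonStrategicRisk β μ t := by
      intro t
      rw [smRisk, nonStrategicRisk]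
      refine hcong _ _ (fun x hx => ?_)
      have hbr : bestResponse c θ x = x := by
        unfold bestResponse; rw [if_pos (hcase1 ▸ hx.1)]
      rw [hbr]
    have hFdiff : ∀ θ', θ < θ' → θ' ≤ θ + δ →
        mixRisk β μ c p θ θ' - mixRisk β μ c p θ θ
          = ∫ x in Ico θ θ', (2 * μ x - 1) * g x ∂volume := by
      intro θ' h1 h2
      have hR := hRnsdiff θ θ' hθ.1 h1.le (by linarith)
      simp only [mixRisk]
      rw [hsmeq, hsmeq]
      linear_combination hR
    have hbd : ∀ θ', θ < θ' → θ' ≤ θ + δ →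
        ∀ x ∈ Ico θ θ', (2 * μ x - 1) * g x ≤ -(ε * m) := by
      intro θ' h1 h2 x hx
      have hxIcc : x ∈ Icc a b := ⟨le_trans hθ.1 hx.1, by linarith [hx.2]⟩
      have hμx : μ x < μ (θ + δ) := hμ_mono hxIcc haδIcc (by linarith [hx.2])
      have hgm := hm_le x hxIcc
      have hg0 := hg_pos x hxIcc
      have h1 : (2 * μ x - 1) * g x ≤ (2 * μ (θ + δ) - 1) * g x :=
        mul_le_mul_of_nonneg_right (by linarith) hg0.le
      have h2 : (2 * μ (θ + δ) - 1) * g x ≤ (2 * μ (θ + δ) - 1) * m :=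
        mul_le_mul_of_nonpos_left hgm (by simp only [hεdef] at hε; linarith)
      simp only [hεdef]
      linarith
    refine kill_right (fun θ' => mixRisk β μ c p θ θ') a b θ (ε * m) δ
      (mul_pos hε hm_pos) hδ hθ.1 (by linarith) ?_ hLS'
    intro θ' hθ'
    have hd := hFdiff θ' hθ'.1 hθ'.2
    have hc := hCoreLe θ θ' (-(ε * m)) hθ.1 hθ'.1.le (by linarith [hθ'.2])
      (hbd θ' hθ'.1 hθ'.2)
    show mixRisk β μ c p θ θ' ≤ mixRisk β μ c p θ θ - ε * m * (θ' - θ)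
    linarith [hd, hc]
  · have haθ : a < θ := lt_of_le_of_ne hθ.1 (Ne.symm hcase1)
    obtain ⟨δc, hδc, hcball⟩ := hcwin θ
    by_cases hcase2 : θ ≤ θSL
    · -- Case I.b : a < θ ≤ θSL
      have hθb : θ < b := lt_of_le_of_lt hcase2 hθSL.2
      set δ := min (δc / 2) (θ - a) with hδdef
      have hδ : 0 < δ := lt_min (by linarith) (by linarith)
      have hδ1 : δ ≤ δc / 2 := min_le_left _ _
      have hδ2 : δ ≤ θ - a := min_le_right _ _
      have hc' : ∀ x ∈ Icc (θ - δ) θ, c x θ ≤ 1 := by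
        intro x hx
        refine hcball x ?_
        rw [abs_lt]
        constructor <;> [linarith [hx.1]; linarith [hx.2]]
      set Q : Set ℝ := (Icc a b ∩ Iio θ) ∩ {x | c x θ ≤ 1} with hQdef
      have hQmeas : MeasurableSet Q :=
        (measurableSet_Icc.inter measurableSet_Iio).inter
          (measurableSet_le
            (hc_cont.comp (continuous_id.prodMk continuous_const)).measurable
            measurable_const)
      have hQsub : Q ⊆ Icc a b := fun x hx => hx.1.1
      have hQnonneg : ∀ x ∈ Q, 0 ≤ (1 - 2 * μ x) * g x := by
        intro x hx
        have hxIcc : x ∈ Icc a b := hx.1.1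
        have hμx : μ x < μ θSL := hμ_mono hxIcc hSLIcc (lt_of_lt_of_le hx.1.2 hcase2)
        rw [hhalf] at hμx
        nlinarith [hg_pos x hxIcc]
      set N := ∫ x in Q, (1 - 2 * μ x) * g x ∂volume with hNdef
      have hsub1 : Ico (θ - δ) (θ - δ / 2) ⊆ Q := by
        intro x hx
        refine ⟨⟨⟨by linarith [hx.1], by linarith [hx.2, hθ.2]⟩, by
          simp only [mem_Iio]; linarith [hx.2]⟩, hc' x ⟨hx.1, by linarith [hx.2]⟩⟩
      have hθδIcc : θ - δ / 2 ∈ Icc a b := ⟨by linarith, by linarith [hθ.2]⟩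
      set ε₀ := 1 - 2 * μ (θ - δ / 2) with hε₀def
      have hε₀ : 0 < ε₀ := by
        have h1 : μ (θ - δ / 2) < μ θSL := hμ_mono hθδIcc hSLIcc (by linarith)
        rw [hhalf] at h1
        simp only [hε₀def]; linarith
      set N₀ := ε₀ * m * (δ / 2) with hN₀def
      have hN₀pos : 0 < N₀ := by positivity
      -- lower bound on integral over Ico (θ-δ) (θ-δ/2)
      have hIneg : (∫ x in Ico (θ - δ) (θ - δ / 2), (1 - 2 * μ x) * g x ∂volume)
          = -∫ x in Ico (θ - δ) (θ - δ / 2), (2 * μ x - 1) * g x ∂volume := by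
        rw [← integral_neg]
        exact integral_congr_ae (ae_of_all _ (fun x => by ring))
      have hstep1 : N₀ ≤ ∫ x in Ico (θ - δ) (θ - δ / 2), (1 - 2 * μ x) * g x ∂volume := by
        have hb1 : ∀ x ∈ Ico (θ - δ) (θ - δ / 2), (2 * μ x - 1) * g x ≤ -(ε₀ * m) := by
          intro x hx
          have hxIcc : x ∈ Icc a b := hQsub (hsub1 hx)
          have hμx : μ x < μ (θ - δ / 2) := hμ_mono hxIcc hθδIcc hx.2
          have hgm := hm_le x hxIcc
          have hg0 := hg_pos x hxIcc
          have h1 : (2 * μ x - 1) * g x ≤ (2 * μ (θ - δ / 2) - 1) * g x :=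
            mul_le_mul_of_nonneg_right (by linarith) hg0.le
          have h2 : (2 * μ (θ - δ / 2) - 1) * g x ≤ (2 * μ (θ - δ / 2) - 1) * m :=
            mul_le_mul_of_nonpos_left hgm (by simp only [hε₀def] at hε₀; linarith)
          simp only [hε₀def]
          linarith
        have := hCoreLe (θ - δ) (θ - δ / 2) (-(ε₀ * m)) (by linarith) (by linarith)
          (by linarith [hθ.2]) hb1
        rw [hIneg]
        simp only [hN₀def, hε₀def] at this ⊢
        linarith
      have hstep2 : (∫ x in Ico (θ - δ) (θ - δ / 2), (1 - 2 * μ x) * g x ∂volume) ≤ N :=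
        setIntegral_mono_set (hd1_int.mono_set hQsub)
          ((ae_restrict_iff' hQmeas).mpr (ae_of_all _ hQnonneg))
          (HasSubset.Subset.eventuallyLE hsub1)
      have hNN₀ : N₀ ≤ N := le_trans hstep1 hstep2
      -- the value of ∫ over Q of (2μ-1)g is -N
      have hQneg : (∫ x in Q, (2 * μ x - 1) * g x ∂volume) = -N := by
        simp only [hNdef]
        rw [← integral_neg]
        exact integral_congr_ae (ae_of_all _ (fun x => by ring))
      -- choose window
      set δ' := (1 - p) * N₀ / (G + 1) with hδ'def
      have hδ'pos : 0 < δ' := div_pos (mul_pos (by linarith) hN₀pos) (by linarith)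
      set δ'' := min δ' (b - θ) with hδ''def
      have hδ''pos : 0 < δ'' := lt_min hδ'pos (by linarith)
      have hδ''1 : δ'' ≤ δ' := min_le_left _ _
      have hδ''2 : δ'' ≤ b - θ := min_le_right _ _
      refine kill_right (fun θ' => mixRisk β μ c p θ θ') a b θ 1 δ''
        one_pos hδ''pos hθ.1 (by linarith) ?_ hLS'
      intro θ' hθ'
      have hθθ' : θ < θ' := hθ'.1
      have hθ'b : θ' ≤ b := by linarith [hθ'.2]
      -- identity for smRisk difference
      have hsm : smRisk β μ c θ θ' - smRisk β μ c θ θ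
          = (∫ x in Ico θ θ', (2 * μ x - 1) * g x ∂volume) - N := by
        rw [smRisk, smRisk]
        rw [key _ _ (fun x => (Ico θ θ').indicator (fun y => 2 * μ y - 1) x
            + Q.indicator (fun y => 2 * μ y - 1) x)
          (hsm_int θ') (hsm_int θ) ?_]
        · rw [integral_add (hIndInt _ measurableSet_Ico) (hIndInt _ hQmeas),
            HB _ measurableSet_Ico (fun x hx => ⟨le_trans hθ.1 hx.1,
              le_trans hx.2.le hθ'b⟩),
            HB _ hQmeas hQsub, hQneg]
          ring
        · intro x hx
          by_cases h1 : θ ≤ x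
          · have hbr : bestResponse c θ x = x := by unfold bestResponse; rw [if_pos h1]
            rw [hbr]
            by_cases h2 : θ' ≤ x
            · rw [if_pos h2, if_pos h1,
                Set.indicator_of_notMem (fun hm => absurd (mem_Ico.mp hm).2
                  (not_lt.mpr h2)) (fun y => 2 * μ y - 1),
                Set.indicator_of_notMem (fun hm => absurd hm.1.2
                  (by simp only [mem_Iio, not_lt]; exact h1)) (fun y => 2 * μ y - 1)]
              ring
            · rw [if_neg h2, if_pos h1,
                Set.indicator_of_mem (mem_Ico.mpr ⟨h1, lt_of_not_ge h2⟩)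
                  (fun y => 2 * μ y - 1),
                Set.indicator_of_notMem (fun hm => absurd hm.1.2
                  (by simp only [mem_Iio, not_lt]; exact h1)) (fun y => 2 * μ y - 1)]
              ring
          · have hxθ : x < θ := lt_of_not_ge h1
            by_cases h3 : c x θ ≤ 1
            · have hbr : bestResponse c θ x = θ := by
                unfold bestResponse; rw [if_neg h1, if_pos h3]
              rw [hbr, if_neg (not_le.mpr hθθ'), if_pos le_rfl,
                Set.indicator_of_notMem (fun hm => absurd (mem_Ico.mp hm).1
                  h1) (fun y => 2 * μ y - 1),
                Set.indicator_of_mem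
                  (show x ∈ Q from ⟨⟨hx, hxθ⟩, h3⟩) (fun y => 2 * μ y - 1)]
              ring
            · have hbr : bestResponse c θ x = x := by
                unfold bestResponse; rw [if_neg h1, if_neg h3]
              rw [hbr, if_neg (by linarith : ¬ θ' ≤ x), if_neg h1,
                Set.indicator_of_notMem (fun hm => absurd (mem_Ico.mp hm).1
                  h1) (fun y => 2 * μ y - 1),
                Set.indicator_of_notMem (fun hm => absurd hm.2 h3)
                  (fun y => 2 * μ y - 1)]
              ring
      have hR := hRnsdiff θ θ' hθ.1 hθθ'.le hθ'b
      have hId : mixRisk β μ c p θ θ' - mixRisk β μ c p θ θ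
          = (∫ x in Ico θ θ', (2 * μ x - 1) * g x ∂volume) - (1 - p) * N := by
        simp only [mixRisk]
        linear_combination p * hR + (1 - p) * hsm
      have hIbd : (∫ x in Ico θ θ', (2 * μ x - 1) * g x ∂volume) ≤ G * (θ' - θ) := by
        refine hCoreLe θ θ' G hθ.1 hθθ'.le hθ'b (fun x hx => ?_)
        have hxIcc : x ∈ Icc a b := ⟨le_trans hθ.1 hx.1, le_trans hx.2.le hθ'b⟩
        obtain ⟨hμ0, hμ1⟩ := hμ_range x hxIcc
        nlinarith [hg_pos x hxIcc, hG_ge x hxIcc]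
      have hδ'eq : δ' * (G + 1) = (1 - p) * N₀ := by
        rw [hδ'def]; field_simp
      have hkey1 : (G + 1) * (θ' - θ) ≤ (G + 1) * δ' :=
        mul_le_mul_of_nonneg_left (by linarith [hθ'.2, hδ''1]) (by linarith)
      have hkey2 : (1 - p) * N₀ ≤ (1 - p) * N :=
        mul_le_mul_of_nonneg_left hNN₀ (by linarith)
      show mixRisk β μ c p θ θ' ≤ mixRisk β μ c p θ θ - 1 * (θ' - θ)
      linarith [hIbd, hδ'eq, hId]
    · -- Case II : θSL < θ
      push_neg at hcase2
      set δ := min (δc / 2) ((θ - θSL) / 2) with hδdef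
      have hδ : 0 < δ := lt_min (by linarith) (by linarith)
      have hδ1 : δ ≤ δc / 2 := min_le_left _ _
      have hδ2 : δ ≤ (θ - θSL) / 2 := min_le_right _ _
      have hθδSL : θSL < θ - δ := by linarith
      have hδa : a ≤ θ - δ := by linarith [hθSL.1]
      have hθδIcc : θ - δ ∈ Icc a b := ⟨hδa, by linarith [hθ.2]⟩
      have hc' : ∀ x ∈ Icc (θ - δ) θ, c x θ ≤ 1 := by
        intro x hx
        refine hcball x ?_
        rw [abs_lt]
        constructor <;> [linarith [hx.1]; linarith [hx.2]]
      set ε := 2 * μ (θ - δ) - 1 with hεdef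
      have hε : 0 < ε := by
        have h1 : μ θSL < μ (θ - δ) := hμ_mono hSLIcc hθδIcc hθδSL
        rw [hhalf] at h1
        simp only [hεdef]; linarith
      refine kill_left (fun θ' => mixRisk β μ c p θ θ') a b θ (p * ε * m) δ
        (by positivity) hδ hδa hθ.2 ?_ hLS'
      intro θ' hθ'
      have hθ'1 : θ - δ ≤ θ' := hθ'.1
      have hθ'2 : θ' < θ := hθ'.2
      have ha' : a ≤ θ' := le_trans hδa hθ'1
      have hsm : smRisk β μ c θ θ' = smRisk β μ c θ θ := by
        rw [smRisk, smRisk]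
        refine hcong _ _ (fun x hx => ?_)
        by_cases h1 : θ ≤ x
        · have hbr : bestResponse c θ x = x := by unfold bestResponse; rw [if_pos h1]
          rw [hbr, if_pos (le_trans hθ'2.le h1), if_pos h1]
        · have hxθ : x < θ := lt_of_not_ge h1
          by_cases h3 : c x θ ≤ 1
          · have hbr : bestResponse c θ x = θ := by
              unfold bestResponse; rw [if_neg h1, if_pos h3]
            rw [hbr, if_pos hθ'2.le, if_pos le_rfl]
          · have hbr : bestResponse c θ x = x := by
              unfold bestResponse; rw [if_neg h1, if_neg h3]
            have hxθ' : ¬ θ' ≤ x := by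
              intro hcon
              exact h3 (hc' x ⟨le_trans hθ'1 hcon, hxθ.le⟩)
            rw [hbr, if_neg hxθ', if_neg h1]
      have hR := hRnsdiff θ' θ ha' hθ'2.le hθ.2
      have hId : mixRisk β μ c p θ θ - mixRisk β μ c p θ θ'
          = p * ∫ x in Ico θ' θ, (2 * μ x - 1) * g x ∂volume := by
        simp only [mixRisk]
        rw [hsm]
        linear_combination p * hR
      have hIbd : ε * m * (θ - θ') ≤ ∫ x in Ico θ' θ, (2 * μ x - 1) * g x ∂volume := by
        refine hCoreGe θ' θ (ε * m) ha' hθ'2.le hθ.2 (fun x hx => ?_)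
        have hxIcc : x ∈ Icc a b := ⟨le_trans ha' hx.1, le_trans hx.2.le hθ.2⟩
        have hμx : μ (θ - δ) ≤ μ x :=
          hμ_mono.monotoneOn hθδIcc hxIcc (le_trans hθ'1 hx.1)
        have hgm := hm_le x hxIcc
        simp only [hεdef] at hε
        have h1 : (2 * μ (θ - δ) - 1) * m ≤ (2 * μ x - 1) * m :=
          mul_le_mul_of_nonneg_right (by linarith) hm_pos.le
        have h2 : (2 * μ x - 1) * m ≤ (2 * μ x - 1) * g x :=
          mul_le_mul_of_nonneg_left hgm (by linarith)
        simp only [hεdef]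
        linarith
      show mixRisk β μ c p θ θ' ≤ mixRisk β μ c p θ θ - p * ε * m * (θ - θ')
      linarith [mul_le_mul_of_nonneg_left hIbd hp0.le, hId]
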